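/- Let β'' ∈ (0,1/2), α'' = 1 − β'', D = 2β''³ − 4β''² + 1, c = (β'' − 2β''²)/D, and let τ₂ be a real number with β'' ≤ τ₂ < 1. Define R_ex = c·(2β''α'' + (τ₂ − β'')α'' + 2β'' + β''²/(α'' − β'')) and R_others = c·((τ₂ − β'')α'' + 2(1 − τ₂)α'' + α''/β''). Then R_ex/(R_ex + R_others) > β'' if and only if α'' < β''(2 − β'' − τ₂)/(1 − τ₂). -/

import Mathlib

theorem profitability_criterion (β'' : ℝ) (hβ0 : 0 < β'') (hβ1 : β'' < 1/2)
    (α'' : ℝ) (hα : α'' = 1 - β'') (D : ℝ) (hD : D = 2*β''^3 - 4*β''^2 + 1)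
    (c : ℝ) (hc : c = (β'' - 2*β''^2) / D)
    (τ₂ : ℝ) (hτ0 : β'' ≤ τ₂) (hτ1 : τ₂ < 1)
    (Rex Rothers : ℝ)
    (hRex : Rex = c * (2*β''*α'' + (τ₂ - β'')*α'' + 2*β'' + β''^2/(α'' - β'')))
    (hRothers : Rothers = c * ((τ₂ - β'')*α'' + 2*(1 - τ₂)*α'' + α''/β'')) :
    Rex / (Rex + Rothers) > β'' ↔ α'' < β''*(2 - β'' - τ₂)/(1 - τ₂) := by
  subst hα hD hc hRex hRothers
  have h2 : (0:ℝ) < 1 - 2*β'' := by linarith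
  have hαpos : (0:ℝ) < 1 - β'' := by linarith
  have hDpos : (0:ℝ) < 2*β''^3 - 4*β''^2 + 1 := by nlinarith
  have hcpos : (0:ℝ) < (β'' - 2*β''^2) / (2*β''^3 - 4*β''^2 + 1) :=
    div_pos (by nlinarith) hDpos
  have hτ2 : (0:ℝ) < 1 - τ₂ := by linarith
  have habne : (1 - β'') - β'' ≠ 0 := by intro h; nlinarith
  have hβne : β'' ≠ 0 := ne_of_gt hβ0
  have hDne : (2*β''^3 - 4*β''^2 + 1) ≠ 0 := ne_of_gt hDpos
  set G : ℝ := β''*(2 - β'' - τ₂) - (1 - β'')*(1 - τ₂) with hG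
  set c : ℝ := (β'' - 2*β''^2) / (2*β''^3 - 4*β''^2 + 1) with hc
  set Rex : ℝ := c * (2*β''*(1-β'') + (τ₂ - β'')*(1-β'') + 2*β'' + β''^2/((1-β'') - β'')) with hRex
  set Rothers : ℝ := c * ((τ₂ - β'')*(1-β'') + 2*(1 - τ₂)*(1-β'') + (1-β'')/β'') with hRo
  have hSpos : 0 < Rex + Rothers := by
    have hA : 0 < 2*β''*(1-β'') + (τ₂ - β'')*(1-β'') + 2*β'' + β''^2/((1-β'') - β'') := by
      have : 0 < β''^2/((1-β'') - β'') := div_pos (by positivity) (by linarith)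
      nlinarith [mul_nonneg (sub_nonneg.2 hτ0) hαpos.le]
    have hB : 0 < (τ₂ - β'')*(1-β'') + 2*(1 - τ₂)*(1-β'') + (1-β'')/β'' := by
      have : 0 < (1-β'')/β'' := div_pos hαpos hβ0
      nlinarith [mul_nonneg (sub_nonneg.2 hτ0) hαpos.le, mul_nonneg hτ2.le hαpos.le]
    rw [hRex, hRo, ← mul_add]
    exact mul_pos hcpos (by linarith)
  have key : Rex - β'' * (Rex + Rothers) = c * (1 - β'') * G / (1 - 2*β'') := by
    rw [hRex, hRo, hG]
    have h2ne : (1 - 2*β'') ≠ 0 := h2.ne'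
    field_simp
    ring
  constructor
  · intro h
    rw [gt_iff_lt, lt_div_iff₀ hSpos] at h
    have hGpos : 0 < G := by
      have h1 : 0 < c * (1 - β'') * G / (1 - 2*β'') := by rw [← key]; linarith
      by_contra hle
      push_neg at hle
      have : c * (1 - β'') * G / (1 - 2*β'') ≤ 0 :=
        div_nonpos_of_nonpos_of_nonneg
          (mul_nonpos_of_nonneg_of_nonpos (by positivity) hle) h2.le
      linarith
    rw [lt_div_iff₀ hτ2]
    nlinarith [hGpos]
  · intro h
    rw [lt_div_iff₀ hτ2] at h
    have hGpos : 0 < G := by rw [hG]; nlinarith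
    rw [gt_iff_lt, lt_div_iff₀ hSpos]
    have h1 : 0 < c * (1 - β'') * G / (1 - 2*β'') :=
      div_pos (by positivity) h2
    linarith [key]
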